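/- arXiv:2008.11240 — 5 statements merged into one kernel-verified Lean document; each statement's English description precedes it below -/
import Mathlib

section
/- Define f_1(ρ) = ρ/sinh(ρ) for ρ > 0 and recursively f_{l+1} = −df_l/dσ where σ = cosh(ρ), i.e., f_{l+1}(ρ) = −(1/sinh(ρ))·f_l'(ρ). Then for every l ≥ 1, f_l is positive and decreasing in ρ on (0, ∞). -/
open Real intervalIntegral MeasureTheory

noncomputable def Qf (ρ u : ℝ) : ℝ := u^2 + 2*u*Real.cosh ρ + 1

noncomputable def Ff (l : ℕ) (ρ u : ℝ) : ℝ := 2 * l.factorial * (2*u)^l / (Qf ρ u)^(l+1)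

noncomputable def Gf (l : ℕ) (ρ : ℝ) : ℝ := ∫ u in (0:ℝ)..1, Ff l ρ u

lemma Qf_ge_one {ρ u : ℝ} (hu : 0 ≤ u) : 1 ≤ Qf ρ u := by
  have h := Real.one_le_cosh ρ
  unfold Qf; nlinarith

lemma Qf_pos {ρ u : ℝ} (hu : 0 ≤ u) : 0 < Qf ρ u := lt_of_lt_of_le one_pos (Qf_ge_one hu)

lemma Ff_nonneg {l : ℕ} {ρ u : ℝ} (hu : 0 ≤ u) : 0 ≤ Ff l ρ u := by
  unfold Ff
  apply div_nonneg
  · positivity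
  · exact pow_nonneg (Qf_pos hu).le _

lemma Ff_continuousOn {l : ℕ} (ρ : ℝ) : ContinuousOn (Ff l ρ) (Set.Icc 0 1) := by
  apply ContinuousOn.div
  · fun_prop
  · apply ContinuousOn.pow
    unfold Qf; fun_prop
  · intro u hu
    exact ne_of_gt (pow_pos (Qf_pos hu.1) _)

lemma Ff_intervalIntegrable {l : ℕ} (ρ : ℝ) : IntervalIntegrable (Ff l ρ) volume 0 1 := by
  apply ContinuousOn.intervalIntegrable
  rw [Set.uIcc_of_le (by norm_num : (0:ℝ) ≤ 1)]
  exact Ff_continuousOn ρ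

lemma hasDerivAt_Qf (u x : ℝ) : HasDerivAt (fun ρ => Qf ρ u) (2*u*Real.sinh x) x := by
  unfold Qf
  have h := ((Real.hasDerivAt_cosh x).const_mul (2*u)).add_const 1
  have h2 := h.const_add (u^2)
  exact h2.congr_of_eventuallyEq (Filter.Eventually.of_forall fun y => by ring)


lemma hasDerivAt_Ff (l : ℕ) {u : ℝ} (hu : 0 ≤ u) (x : ℝ) :
    HasDerivAt (fun ρ => Ff l ρ u) (-(Real.sinh x) * Ff (l+1) x u) x := by
  have hQ : (0:ℝ) < Qf x u := Qf_pos hu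
  have hQpow : HasDerivAt (fun ρ => (Qf ρ u)^(l+1))
      ((l+1 : ℕ) * (Qf x u)^l * (2*u*Real.sinh x)) x := by
    simpa using (hasDerivAt_Qf u x).fun_pow (l+1)
  have h := (hasDerivAt_const x (2 * (l.factorial : ℝ) * (2*u)^l)).div hQpow
    (ne_of_gt (pow_pos hQ _))
  refine h.congr_deriv ?_
  symm
  unfold Ff
  have h1 : Qf x u ^ (l+1+1) ≠ 0 := by positivity
  have h2 : ((Qf x u)^(l+1))^2 ≠ 0 := by positivity
  field_simp
  push_cast [Nat.factorial_succ]
  ring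

lemma Ff_le_bound (l : ℕ) {u : ℝ} (hu : 0 ≤ u) (hu1 : u ≤ 1) (x : ℝ) :
    Ff l x u ≤ 2 * l.factorial * 2^l := by
  unfold Ff
  have h1 : (1:ℝ) ≤ Qf x u ^ (l+1) := one_le_pow₀ (Qf_ge_one hu)
  have h2 : (2*u)^l ≤ 2^l := by
    apply pow_le_pow_left₀ (by linarith) (by linarith)
  have hfac : (0:ℝ) ≤ (l.factorial:ℝ) := Nat.cast_nonneg _
  calc 2 * (l.factorial:ℝ) * (2*u)^l / Qf x u ^ (l+1)
      ≤ 2 * (l.factorial:ℝ) * (2*u)^l / 1 :=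
        div_le_div_of_nonneg_left (by positivity) one_pos h1
    _ ≤ 2 * l.factorial * 2^l := by rw [div_one]; nlinarith

lemma aesm_Ff (l : ℕ) (ρ : ℝ) :
    MeasureTheory.AEStronglyMeasurable (Ff l ρ)
      (MeasureTheory.volume.restrict (Set.uIoc (0:ℝ) 1)) := by
  apply ContinuousOn.aestronglyMeasurable _ measurableSet_uIoc
  intro u hu
  rw [Set.uIoc_of_le (by norm_num : (0:ℝ) ≤ 1)] at hu
  exact (Ff_continuousOn ρ).continuousWithinAt (Set.mem_Icc.2 ⟨hu.1.le, hu.2⟩)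
    |>.mono (fun y hy => by
      rw [Set.uIoc_of_le (by norm_num : (0:ℝ) ≤ 1)] at hy
      exact Set.mem_Icc.2 ⟨hy.1.le, hy.2⟩)

lemma hasDerivAt_Gf (l : ℕ) (x : ℝ) :
    HasDerivAt (Gf l) (-(Real.sinh x) * Gf (l+1) x) x := by
  have key := intervalIntegral.hasDerivAt_integral_of_dominated_loc_of_deriv_le
    (F := fun ρ u => Ff l ρ u) (F' := fun ρ u => -(Real.sinh ρ) * Ff (l+1) ρ u)
    (x₀ := x) (a := (0:ℝ)) (b := 1) (μ := MeasureTheory.volume)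
    (bound := fun _ => Real.sinh (|x|+1) * (2 * (l+1).factorial * 2^(l+1)))
    (s := Metric.ball x 1) (Metric.ball_mem_nhds x one_pos)
    (Filter.Eventually.of_forall (fun ρ => aesm_Ff l ρ))
    (Ff_intervalIntegrable x)
    ?_ ?_ ?_ ?_
  · have : (∫ u in (0:ℝ)..1, -(Real.sinh x) * Ff (l+1) x u)
        = -(Real.sinh x) * Gf (l+1) x := by
      rw [intervalIntegral.integral_const_mul]; rfl
    rw [← this]
    exact key.2
  · -- measurability of F' x
    exact (aesm_Ff (l+1) x).const_mul _
  · -- bound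
    apply Filter.Eventually.of_forall
    intro u hu ρ hρ
    rw [Set.uIoc_of_le (by norm_num : (0:ℝ) ≤ 1)] at hu
    have hu0 : 0 ≤ u := hu.1.le
    rw [Real.norm_eq_abs, abs_mul, abs_neg, Real.abs_sinh,
      abs_of_nonneg (Ff_nonneg hu0)]
    have h1 : Real.sinh |ρ| ≤ Real.sinh (|x|+1) := by
      rw [Real.sinh_le_sinh]
      have := mem_ball_iff_norm.1 hρ
      rw [Real.norm_eq_abs] at this
      calc |ρ| = |x + (ρ - x)| := by ring_nf
        _ ≤ |x| + |ρ - x| := abs_add_le _ _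
        _ ≤ |x| + 1 := by linarith [this.le]
    have h2 : Ff (l+1) ρ u ≤ 2 * (l+1).factorial * 2^(l+1) := Ff_le_bound _ hu0 hu.2 ρ
    have h3 : 0 ≤ Real.sinh |ρ| := Real.sinh_nonneg_iff.2 (abs_nonneg ρ)
    have h4 : (0:ℝ) ≤ 2 * (l+1).factorial * 2^(l+1) := by positivity
    calc Real.sinh |ρ| * Ff (l+1) ρ u ≤ Real.sinh (|x|+1) * Ff (l+1) ρ u :=
          mul_le_mul_of_nonneg_right h1 (Ff_nonneg hu0)
      _ ≤ Real.sinh (|x|+1) * (2 * (l+1).factorial * 2^(l+1)) := by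
          apply mul_le_mul_of_nonneg_left h2
          exact le_trans h3 h1
  · exact intervalIntegrable_const
  · apply Filter.Eventually.of_forall
    intro u hu ρ hρ
    rw [Set.uIoc_of_le (by norm_num : (0:ℝ) ≤ 1)] at hu
    exact hasDerivAt_Ff l hu.1.le ρ

lemma Gf_zero {ρ : ℝ} (hρ : 0 < ρ) : Gf 0 ρ = ρ / Real.sinh ρ := by
  have hs : 0 < Real.sinh ρ := Real.sinh_pos_iff.2 hρ
  set H : ℝ → ℝ := fun u => (1/Real.sinh ρ) * (Real.log (u + Real.exp (-ρ)) - Real.log (u + Real.exp ρ)) with hH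
  have hderiv : ∀ u ∈ Set.uIcc (0:ℝ) 1, HasDerivAt H (Ff 0 ρ u) u := by
    intro u hu
    rw [Set.uIcc_of_le (by norm_num : (0:ℝ) ≤ 1)] at hu
    have hu0 : 0 ≤ u := hu.1
    have he1 : (0:ℝ) < u + Real.exp (-ρ) := by positivity
    have he2 : (0:ℝ) < u + Real.exp ρ := by positivity
    have d1 : HasDerivAt (fun u : ℝ => Real.log (u + Real.exp (-ρ))) (1/(u + Real.exp (-ρ))) u := by
      simpa using (((hasDerivAt_id u).add_const (Real.exp (-ρ))).log he1.ne')
    have d2 : HasDerivAt (fun u : ℝ => Real.log (u + Real.exp ρ)) (1/(u + Real.exp ρ)) u := by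
      simpa using (((hasDerivAt_id u).add_const (Real.exp ρ)).log he2.ne')
    have := ((d1.sub d2).const_mul (1/Real.sinh ρ))
    refine this.congr_deriv ?_
    symm
    unfold Ff
    have hQ : Qf ρ u = (u + Real.exp (-ρ)) * (u + Real.exp ρ) := by
      unfold Qf
      have : Real.exp (-ρ) * Real.exp ρ = 1 := by
        rw [← Real.exp_add]; simp
      have hc : Real.exp (-ρ) + Real.exp ρ = 2 * Real.cosh ρ := by
        rw [Real.cosh_eq]; ring
      nlinarith [hc]
    rw [hQ]
    have hba : (u + Real.exp ρ) - (u + Real.exp (-ρ)) = 2 * Real.sinh ρ := by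
      rw [Real.sinh_eq]; ring
    rw [one_div, one_div, one_div, inv_sub_inv he1.ne' he2.ne', hba]
    rw [Nat.factorial_zero, pow_zero]
    field_simp
    simp
  have hint := intervalIntegral.integral_eq_sub_of_hasDerivAt hderiv (Ff_intervalIntegrable ρ)
  unfold Gf
  rw [hint]
  show (1/Real.sinh ρ) * (Real.log (1 + Real.exp (-ρ)) - Real.log (1 + Real.exp ρ))
      - (1/Real.sinh ρ) * (Real.log (0 + Real.exp (-ρ)) - Real.log (0 + Real.exp ρ))
      = ρ / Real.sinh ρ
  have hlog1 : Real.log (1 + Real.exp (-ρ)) - Real.log (1 + Real.exp ρ) = -ρ := by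
    have : 1 + Real.exp (-ρ) = Real.exp (-ρ) * (1 + Real.exp ρ) := by
      rw [mul_add, mul_one, ← Real.exp_add]; simp [add_comm]
    rw [this, Real.log_mul (Real.exp_ne_zero _) (by positivity), Real.log_exp]
    ring
  have hlog0 : Real.log (0 + Real.exp (-ρ)) - Real.log (0 + Real.exp ρ) = -2*ρ := by
    simp [Real.log_exp]; ring
  rw [hlog1, hlog0]
  field_simp
  ring

/-- `hf l` is the function `f_{l+1}` of the paper: `hf 0 = f_1 = ρ/sinh ρ`,
and `f_{l+1} = -(1/sinh ρ) · f_l'` (derivative with respect to `σ = cosh ρ`). -/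
noncomputable def hf : ℕ → ℝ → ℝ
  | 0 => fun ρ => ρ / Real.sinh ρ
  | (l + 1) => fun ρ => -(1 / Real.sinh ρ) * deriv (hf l) ρ

lemma hf_eq_Gf (l : ℕ) : ∀ ρ : ℝ, 0 < ρ → hf l ρ = Gf l ρ := by
  induction l with
  | zero => intro ρ hρ; rw [Gf_zero hρ]; rfl
  | succ l ih =>
    intro ρ hρ
    have hs : Real.sinh ρ ≠ 0 := (Real.sinh_pos_iff.2 hρ).ne'
    have hev : hf l =ᶠ[nhds ρ] Gf l := by
      filter_upwards [IsOpen.mem_nhds isOpen_Ioi hρ] with y hy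
      exact ih y hy
    have hd : deriv (hf l) ρ = -(Real.sinh ρ) * Gf (l+1) ρ := by
      rw [hev.deriv_eq]
      exact (hasDerivAt_Gf l ρ).deriv
    show -(1 / Real.sinh ρ) * deriv (hf l) ρ = Gf (l+1) ρ
    rw [hd]
    field_simp

lemma Gf_pos (l : ℕ) (ρ : ℝ) : 0 < Gf l ρ := by
  apply intervalIntegral.intervalIntegral_pos_of_pos_on (Ff_intervalIntegrable ρ) _ one_pos
  intro u hu
  unfold Ff
  apply div_pos
  · have := hu.1
    positivity
  · exact pow_pos (Qf_pos hu.1.le) _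

lemma Gf_anti (l : ℕ) : AntitoneOn (Gf l) (Set.Ioi 0) := by
  intro ρ1 h1 ρ2 h2 h12
  simp only [Set.mem_Ioi] at h1 h2
  apply intervalIntegral.integral_mono_on (by norm_num)
    (Ff_intervalIntegrable ρ2) (Ff_intervalIntegrable ρ1)
  intro u hu
  have hu0 : 0 ≤ u := hu.1
  have hQ : Qf ρ1 u ^ (l+1) ≤ Qf ρ2 u ^ (l+1) := by
    apply pow_le_pow_left₀ (Qf_pos hu0).le
    unfold Qf
    have hc : Real.cosh ρ1 ≤ Real.cosh ρ2 := by
      rw [Real.cosh_le_cosh, abs_of_pos h1, abs_of_pos h2]; exact h12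
    nlinarith
  unfold Ff
  exact div_le_div_of_nonneg_left (by positivity) (pow_pos (Qf_pos hu0) _) hQ

theorem f_pos_antitone (l : ℕ) :
    (∀ ρ : ℝ, 0 < ρ → 0 < hf l ρ) ∧ AntitoneOn (hf l) (Set.Ioi 0) := by
  constructor
  · intro ρ hρ
    rw [hf_eq_Gf l ρ hρ]
    exact Gf_pos l ρ
  · intro ρ1 h1 ρ2 h2 h12
    rw [hf_eq_Gf l ρ1 h1, hf_eq_Gf l ρ2 h2]
    exact Gf_anti l h1 h2 h12
end

section
/- With f_1(ρ) = ρ/sinh(ρ) and f_{l+1} = −df_l/dσ (σ = cosh ρ), for every l ≥ 1 the function −f_{l+1}/f_l is nondecreasing in σ, i.e., (d/dσ)(−f_{l+1}/f_l) ≥ 0 on (0, ∞). -/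
open Real MeasureTheory Set Filter Topology

noncomputable def FF (l : ℕ) (ρ : ℝ) : ℝ :=
  ∫ t in Ioi (0:ℝ), ((Real.cosh ρ + Real.cosh t) ^ (l + 1))⁻¹

lemma den_pos (ρ t : ℝ) : 0 < Real.cosh ρ + Real.cosh t :=
  add_pos (Real.cosh_pos ρ) (Real.cosh_pos t)

lemma inv_cosh_le (t : ℝ) : (Real.cosh t)⁻¹ ≤ 2 * Real.exp (-t) := by
  rw [Real.cosh_eq]
  rw [inv_le_iff_one_le_mul₀ (by positivity)]
  have h : Real.exp (-t) * Real.exp t = 1 := by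
    rw [← Real.exp_add]; simp
  nlinarith [Real.exp_pos (-t), Real.exp_pos t, Real.exp_nonneg (-t)]

lemma integrand_le (l : ℕ) (ρ t : ℝ) :
    ((Real.cosh ρ + Real.cosh t) ^ (l + 1))⁻¹ ≤ 2 * Real.exp (-t) := by
  refine le_trans ?_ (inv_cosh_le t)
  apply inv_anti₀ (Real.cosh_pos t)
  calc Real.cosh t ≤ Real.cosh ρ + Real.cosh t := by nlinarith [Real.cosh_pos ρ]
    _ ≤ (Real.cosh ρ + Real.cosh t) ^ (l+1) := by
        apply le_self_pow₀ ?_ (by omega)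
        nlinarith [Real.one_le_cosh ρ, Real.one_le_cosh t]

lemma exp_int : IntegrableOn (fun t : ℝ => 2 * Real.exp (-t)) (Ioi 0) := by
  have := (exp_neg_integrableOn_Ioi 0 (one_pos)).const_mul 2
  simpa [IntegrableOn] using this

lemma intFF (l : ℕ) (ρ : ℝ) :
    IntegrableOn (fun t => ((Real.cosh ρ + Real.cosh t) ^ (l + 1))⁻¹) (Ioi 0) := by
  apply Integrable.mono exp_int
  · exact (Continuous.inv₀ (by continuity) (fun t => (pow_ne_zero _ (den_pos ρ t).ne'))).aestronglyMeasurable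
  · filter_upwards [ae_restrict_mem measurableSet_Ioi] with t ht
    rw [Real.norm_eq_abs, Real.norm_eq_abs, abs_of_pos (by positivity), abs_of_pos (by positivity)]
    exact integrand_le l ρ t

lemma ptderiv (l : ℕ) (t x : ℝ) :
    HasDerivAt (fun x => ((Real.cosh x + Real.cosh t) ^ (l + 1))⁻¹)
      (-((l:ℝ)+1) * Real.sinh x * ((Real.cosh x + Real.cosh t) ^ (l + 2))⁻¹) x := by
  have h1 : HasDerivAt (fun x => Real.cosh x + Real.cosh t) (Real.sinh x) x := by
    simpa using (Real.hasDerivAt_cosh x).add_const (Real.cosh t)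
  have hc : (0:ℝ) < Real.cosh x + Real.cosh t := add_pos (Real.cosh_pos x) (Real.cosh_pos t)
  have h2 := (h1.pow (l+1)).inv (pow_ne_zero _ hc.ne')
  convert h2 using 1
  · rfl
  · rfl
  · rfl
  have e : ((Real.cosh x + Real.cosh t) ^ (l+1))^2 = (Real.cosh x + Real.cosh t)^l * (Real.cosh x + Real.cosh t)^(l+2) := by
    rw [← pow_mul, ← pow_add]; ring_nf
  simp only [Pi.pow_apply, Nat.add_sub_cancel]
  rw [e]
  field_simp
  push_cast
  ring

lemma abs_sinh_le_cosh (x : ℝ) : |Real.sinh x| ≤ Real.cosh x := by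
  rw [abs_le, Real.sinh_eq, Real.cosh_eq]
  constructor <;> nlinarith [Real.exp_pos x, Real.exp_pos (-x)]

lemma cosh_le_of_ball {ρ x : ℝ} (hx : x ∈ Metric.ball ρ 1) :
    Real.cosh x ≤ Real.cosh (|ρ| + 1) := by
  apply Real.cosh_le_cosh.2
  rw [abs_of_nonneg (by positivity : (0:ℝ) ≤ |ρ| + 1)]
  rw [Metric.mem_ball, Real.dist_eq] at hx
  calc |x| = |ρ + (x - ρ)| := by ring_nf
    _ ≤ |ρ| + |x - ρ| := abs_add_le _ _
    _ ≤ |ρ| + 1 := by linarith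

lemma FF_deriv (l : ℕ) (ρ : ℝ) :
    HasDerivAt (FF l) (-((l:ℝ)+1) * Real.sinh ρ * FF (l+1) ρ) ρ := by
  have key := hasDerivAt_integral_of_dominated_loc_of_deriv_le
    (F := fun x t => ((Real.cosh x + Real.cosh t) ^ (l + 1))⁻¹)
    (F' := fun x t => -((l:ℝ)+1) * Real.sinh x * ((Real.cosh x + Real.cosh t) ^ (l + 2))⁻¹)
    (μ := volume.restrict (Ioi (0:ℝ))) (x₀ := ρ)
    (bound := fun t => (((l:ℝ)+1) * Real.cosh (|ρ|+1)) * (2 * Real.exp (-t)))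
    (Metric.ball_mem_nhds ρ one_pos)
    (Filter.Eventually.of_forall (fun x =>
      (Continuous.inv₀ (by continuity) (fun t => (pow_ne_zero _ (den_pos x t).ne'))).aestronglyMeasurable))
    (intFF l ρ)
    (by
      apply Continuous.aestronglyMeasurable
      exact (continuous_const.mul (Continuous.inv₀ (by continuity)
        (fun t => (pow_ne_zero _ (den_pos ρ t).ne')))))
    (by
      filter_upwards [ae_restrict_mem measurableSet_Ioi] with t ht x hx
      rw [norm_mul, norm_mul]
      have h1 : ‖-((l:ℝ)+1)‖ = (l:ℝ)+1 := by
        rw [norm_neg, Real.norm_eq_abs, abs_of_nonneg (by positivity)]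
      have h2 : ‖Real.sinh x‖ ≤ Real.cosh (|ρ|+1) :=
        le_trans (abs_sinh_le_cosh x) (cosh_le_of_ball hx)
      have h3 : ‖((Real.cosh x + Real.cosh t) ^ (l + 2))⁻¹‖ ≤ 2 * Real.exp (-t) := by
        rw [Real.norm_eq_abs, abs_of_pos (inv_pos.2 (pow_pos (den_pos x t) _))]
        exact integrand_le (l+1) x t
      rw [h1]
      have hnn : (0:ℝ) ≤ ‖Real.sinh x‖ := norm_nonneg _
      have hnn2 : (0:ℝ) ≤ ‖((Real.cosh x + Real.cosh t) ^ (l + 2))⁻¹‖ := norm_nonneg _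
      have hl : (0:ℝ) ≤ (l:ℝ)+1 := by positivity
      calc ((l:ℝ)+1) * ‖Real.sinh x‖ * ‖((Real.cosh x + Real.cosh t) ^ (l + 2))⁻¹‖
          ≤ ((l:ℝ)+1) * Real.cosh (|ρ|+1) * (2 * Real.exp (-t)) := by
            apply mul_le_mul (mul_le_mul le_rfl h2 hnn hl) h3 hnn2
            positivity
    )
    (by
      have := exp_int.const_mul (((l:ℝ)+1) * Real.cosh (|ρ|+1))
      simpa [mul_assoc] using this)
    (Filter.Eventually.of_forall (fun t => fun x _ => ptderiv l t x))
  have h2 := key.2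
  have : (∫ t in Ioi (0:ℝ), -((l:ℝ)+1) * Real.sinh ρ * ((Real.cosh ρ + Real.cosh t) ^ (l + 2))⁻¹)
      = -((l:ℝ)+1) * Real.sinh ρ * FF (l+1) ρ := by
    rw [FF, ← MeasureTheory.integral_const_mul]
  rw [this] at h2
  exact h2

lemma alg_id (a b : ℝ) (h : Real.sinh (a - b) ≠ 0) :
    (Real.sinh (a-b))⁻¹ * ((Real.cosh a)⁻¹ * (Real.sinh a * (1/2)) - (Real.cosh b)⁻¹ * (Real.sinh b * (1/2)))
      = (Real.cosh (a-b) + Real.cosh (a+b))⁻¹ := by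
  have h2 := h
  rw [Real.sinh_sub] at h2 ⊢
  rw [Real.cosh_sub, Real.cosh_add]
  have ha := (Real.cosh_pos a).ne'
  have hb := (Real.cosh_pos b).ne'
  field_simp
  ring

lemma log_cosh (x : ℝ) : Real.log (Real.cosh x) = x + Real.log ((1 + Real.exp (-(2*x)))/2) := by
  have h : Real.cosh x = Real.exp x * ((1 + Real.exp (-(2*x)))/2) := by
    rw [Real.cosh_eq]
    rw [show -(2*x) = -x + -x by ring, Real.exp_add]
    have := Real.exp_ne_zero x
    field_simp [Real.exp_neg]
    have h2 : Real.exp x * Real.exp (-x) = 1 := by rw [← Real.exp_add]; simp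
    linear_combination (-Real.exp (-x)) * h2
  rw [h, Real.log_mul (Real.exp_ne_zero x) (by positivity), Real.log_exp]

noncomputable def gg (ρ t : ℝ) : ℝ :=
  (Real.sinh ρ)⁻¹ * (Real.log (Real.cosh ((t+ρ)/2)) - Real.log (Real.cosh ((t-ρ)/2)))

lemma gg_deriv (ρ : ℝ) (hρ : Real.sinh ρ ≠ 0) (t : ℝ) :
    HasDerivAt (gg ρ) ((Real.cosh ρ + Real.cosh t)⁻¹) t := by
  have d1 : HasDerivAt (fun t : ℝ => (t+ρ)/2) (1/2) t := by
    simpa using ((hasDerivAt_id t).add_const ρ).div_const 2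
  have d2 : HasDerivAt (fun t : ℝ => (t-ρ)/2) (1/2) t := by
    simpa using ((hasDerivAt_id t).sub_const ρ).div_const 2
  have c1 := (Real.hasDerivAt_cosh ((t+ρ)/2)).comp t d1
  have c2 := (Real.hasDerivAt_cosh ((t-ρ)/2)).comp t d2
  have l1 := ((Real.hasDerivAt_log (Real.cosh_pos ((t+ρ)/2)).ne').comp t c1)
  have l2 := ((Real.hasDerivAt_log (Real.cosh_pos ((t-ρ)/2)).ne').comp t c2)
  have D := ((l1.sub l2).const_mul ((Real.sinh ρ)⁻¹))
  have key : (Real.sinh ρ)⁻¹ * ((Real.cosh ((t+ρ)/2))⁻¹ * (Real.sinh ((t+ρ)/2) * (1/2))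
      - (Real.cosh ((t-ρ)/2))⁻¹ * (Real.sinh ((t-ρ)/2) * (1/2)))
      = (Real.cosh ρ + Real.cosh t)⁻¹ := by
    have hab : (t+ρ)/2 - (t-ρ)/2 = ρ := by ring
    have hab2 : (t+ρ)/2 + (t-ρ)/2 = t := by ring
    have := alg_id ((t+ρ)/2) ((t-ρ)/2) (by rw [hab]; exact hρ)
    rw [hab, hab2] at this
    exact this
  rw [← key]
  exact D

lemma gg_eq (ρ : ℝ) (t : ℝ) : gg ρ t = (Real.sinh ρ)⁻¹ *
    (ρ + Real.log ((1 + Real.exp (-(t+ρ)))/2) - Real.log ((1 + Real.exp (-(t-ρ)))/2)) := by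
  rw [gg, log_cosh, log_cosh,
    show -(2*((t+ρ)/2)) = -(t+ρ) by ring, show -(2*((t-ρ)/2)) = -(t-ρ) by ring]
  ring

lemma L_tendsto (c : ℝ) :
    Tendsto (fun t : ℝ => Real.log ((1 + Real.exp (-(t+c)))/2)) atTop (𝓝 (Real.log (1/2))) := by
  have h1 : Tendsto (fun t:ℝ => t + c) atTop atTop := tendsto_atTop_add_const_right _ _ tendsto_id
  have h2 : Tendsto (fun t:ℝ => Real.exp (-(t+c))) atTop (𝓝 0) :=
    Real.tendsto_exp_neg_atTop_nhds_zero.comp h1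
  have h3 : Tendsto (fun t:ℝ => (1 + Real.exp (-(t+c)))/2) atTop (𝓝 ((1+0)/2)) :=
    (h2.const_add 1).div_const 2
  have h4 : Tendsto (fun t:ℝ => (1 + Real.exp (-(t+c)))/2) atTop (𝓝 (1/2)) := by norm_num at h3 ⊢; exact h3
  exact ((Real.continuousAt_log (by norm_num)).tendsto.comp h4)

lemma gg_tendsto (ρ : ℝ) : Tendsto (gg ρ) atTop (𝓝 ((Real.sinh ρ)⁻¹ * ρ)) := by
  have h := ((tendsto_const_nhds (x := ρ)).add (L_tendsto ρ)).sub (L_tendsto (-ρ))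
  have h2 := h.const_mul ((Real.sinh ρ)⁻¹)
  simp only [add_sub_cancel_right] at h2
  have : ∀ t : ℝ, gg ρ t = (Real.sinh ρ)⁻¹ * (ρ + Real.log ((1 + Real.exp (-(t+ρ)))/2) - Real.log ((1 + Real.exp (-(t+-ρ)))/2)) := by
    intro t
    rw [gg_eq, show -(t-ρ) = -(t+-ρ) by ring]
  rw [funext this]
  exact h2

lemma gg_zero (ρ : ℝ) : gg ρ 0 = 0 := by
  rw [gg, show (0-ρ)/2 = -((0+ρ)/2) by ring, Real.cosh_neg]
  ring

lemma FF_zero (ρ : ℝ) (hρ : 0 < ρ) :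
    (∫ t in Ioi (0:ℝ), ((Real.cosh ρ + Real.cosh t) ^ 1)⁻¹) = ρ / Real.sinh ρ := by
  have hs : Real.sinh ρ ≠ 0 := (Real.sinh_pos_iff.2 hρ).ne'
  have hint : IntegrableOn (fun t => (Real.cosh ρ + Real.cosh t)⁻¹) (Ioi (0:ℝ)) := by
    have := intFF 0 ρ
    simpa using this
  have key := integral_Ioi_of_hasDerivAt_of_tendsto' (a := 0)
    (fun x _ => gg_deriv ρ hs x) hint (gg_tendsto ρ)
  rw [gg_zero] at key
  simp only [pow_one]
  rw [key]
  field_simp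
  ring

lemma FF_pos (l : ℕ) (ρ : ℝ) : 0 < FF l ρ := by
  rw [FF]
  rw [setIntegral_pos_iff_support_of_nonneg_ae]
  · have : Function.support (fun t => ((Real.cosh ρ + Real.cosh t) ^ (l + 1))⁻¹) = univ := by
      ext t
      simp only [Function.mem_support, ne_eq, inv_eq_zero, pow_eq_zero_iff', mem_univ, iff_true]
      exact fun h => absurd h.1 (den_pos ρ t).ne'
    rw [this]
    simp [Real.volume_Ioi]
  · filter_upwards with t
    positivity
  · exact intFF l ρ

lemma cs_aux {u v : ℝ → ℝ}
    (hu : IntegrableOn (fun t => u t * u t) (Ioi 0))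
    (hv : IntegrableOn (fun t => v t * v t) (Ioi 0))
    (huv : IntegrableOn (fun t => u t * v t) (Ioi 0))
    (hA : 0 < ∫ t in Ioi (0:ℝ), u t * u t) :
    (∫ t in Ioi (0:ℝ), u t * v t)^2
      ≤ (∫ t in Ioi (0:ℝ), u t * u t) * (∫ t in Ioi (0:ℝ), v t * v t) := by
  set A := ∫ t in Ioi (0:ℝ), u t * u t with hAdef
  set B := ∫ t in Ioi (0:ℝ), u t * v t with hBdef
  set C := ∫ t in Ioi (0:ℝ), v t * v t with hCdef
  have h0 : (0:ℝ) ≤ ∫ t in Ioi (0:ℝ), (B * u t - A * v t)^2 :=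
    integral_nonneg (fun t => sq_nonneg _)
  have hexp : ∀ t, (B * u t - A * v t)^2
      = B^2 * (u t * u t) - 2*A*B*(u t * v t) + A^2 * (v t * v t) := by
    intro t; ring
  have i1 : Integrable (fun t => B^2*(u t*u t)) (volume.restrict (Ioi 0)) := hu.const_mul _
  have i2 : Integrable (fun t => 2*A*B*(u t*v t)) (volume.restrict (Ioi 0)) := huv.const_mul _
  have i3 : Integrable (fun t => A^2*(v t*v t)) (volume.restrict (Ioi 0)) := hv.const_mul _
  have i12 : Integrable (fun t => B^2*(u t*u t) - 2*A*B*(u t*v t)) (volume.restrict (Ioi 0)) :=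
    i1.sub i2
  have hval : (∫ t in Ioi (0:ℝ), (B * u t - A * v t)^2) = B^2*A - 2*A*B*B + A^2*C := by
    calc (∫ t in Ioi (0:ℝ), (B * u t - A * v t)^2)
        = ∫ t in Ioi (0:ℝ), (B^2*(u t*u t) - 2*A*B*(u t*v t) + A^2*(v t*v t)) :=
          integral_congr_ae (Filter.Eventually.of_forall (fun t => hexp t))
      _ = (∫ t in Ioi (0:ℝ), (B^2*(u t*u t) - 2*A*B*(u t*v t)))
            + ∫ t in Ioi (0:ℝ), A^2*(v t*v t) := integral_add i12 i3
      _ = (∫ t in Ioi (0:ℝ), B^2*(u t*u t)) - (∫ t in Ioi (0:ℝ), 2*A*B*(u t*v t))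
            + ∫ t in Ioi (0:ℝ), A^2*(v t*v t) := by rw [integral_sub i1 i2]
      _ = B^2*A - 2*A*B*B + A^2*C := by
          rw [integral_const_mul, integral_const_mul, integral_const_mul]
  rw [hval] at h0
  nlinarith [h0, hA]

lemma FF_cs (l : ℕ) (ρ : ℝ) : (FF (l+1) ρ)^2 ≤ FF l ρ * FF (l+2) ρ := by
  set c : ℝ → ℝ := fun t => Real.cosh ρ + Real.cosh t with hc
  have hcpos : ∀ t, 0 < c t := fun t => den_pos ρ t
  set u : ℝ → ℝ := fun t => (c t) ^ (-(((l:ℝ)+1)/2)) with hu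
  set v : ℝ → ℝ := fun t => (c t) ^ (-(((l:ℝ)+3)/2)) with hv
  have epow : ∀ (k : ℕ) (t : ℝ), (c t) ^ (-((k:ℝ)+1)) = ((c t) ^ (k+1))⁻¹ := by
    intro k t
    rw [Real.rpow_neg (hcpos t).le, ← Real.rpow_natCast (c t) (k+1)]
    push_cast
    ring_nf
  have huu : ∀ t, u t * u t = ((c t) ^ (l+1))⁻¹ := by
    intro t
    rw [hu, ← Real.rpow_add (hcpos t), show -(((l:ℝ)+1)/2) + -(((l:ℝ)+1)/2) = -((l:ℝ)+1) by ring,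
      epow l t]
  have hvv : ∀ t, v t * v t = ((c t) ^ (l+2+1))⁻¹ := by
    intro t
    rw [hv, ← Real.rpow_add (hcpos t), show -(((l:ℝ)+3)/2) + -(((l:ℝ)+3)/2) = -(((l:ℝ)+2)+1) by ring]
    have := epow (l+2) t
    push_cast at this ⊢
    rw [this]
  have huv : ∀ t, u t * v t = ((c t) ^ (l+1+1))⁻¹ := by
    intro t
    rw [hu, hv, ← Real.rpow_add (hcpos t), show -(((l:ℝ)+1)/2) + -(((l:ℝ)+3)/2) = -(((l:ℝ)+1)+1) by ring]
    have := epow (l+1) t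
    push_cast at this ⊢
    rw [this]
  have e0 : FF l ρ = ∫ t in Ioi (0:ℝ), u t * u t := by
    rw [FF]; exact (integral_congr_ae (Filter.Eventually.of_forall (fun t => (huu t).symm)))
  have e2 : FF (l+2) ρ = ∫ t in Ioi (0:ℝ), v t * v t := by
    rw [FF]; exact (integral_congr_ae (Filter.Eventually.of_forall (fun t => (hvv t).symm)))
  have e1 : FF (l+1) ρ = ∫ t in Ioi (0:ℝ), u t * v t := by
    rw [FF]; exact (integral_congr_ae (Filter.Eventually.of_forall (fun t => (huv t).symm)))
  rw [e0, e1, e2]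
  apply cs_aux
  · have := intFF l ρ; rw [funext huu]; exact this
  · have := intFF (l+2) ρ; rw [funext hvv]; exact this
  · have := intFF (l+1) ρ; rw [funext huv]; exact this
  · rw [← e0]; exact FF_pos l ρ

lemma hf_eq (l : ℕ) : ∀ ρ : ℝ, 0 < ρ → hf l ρ = (Nat.factorial l : ℝ) * FF l ρ := by
  induction l with
  | zero =>
    intro ρ hρ
    have : FF 0 ρ = ρ / Real.sinh ρ := by
      rw [FF]
      exact_mod_cast FF_zero ρ hρ
    rw [hf, this, Nat.factorial_zero]
    norm_num
  | succ l ih =>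
    intro ρ hρ
    have hs : Real.sinh ρ ≠ 0 := (Real.sinh_pos_iff.2 hρ).ne'
    have hev : hf l =ᶠ[𝓝 ρ] fun x => (Nat.factorial l : ℝ) * FF l x := by
      filter_upwards [Ioi_mem_nhds hρ] with x hx
      exact ih x hx
    have hd : deriv (hf l) ρ = (Nat.factorial l : ℝ) * (-((l:ℝ)+1) * Real.sinh ρ * FF (l+1) ρ) := by
      rw [hev.deriv_eq]
      exact (((FF_deriv l ρ).const_mul ((Nat.factorial l : ℝ)))).deriv
    show -(1 / Real.sinh ρ) * deriv (hf l) ρ = _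
    rw [hd, Nat.factorial_succ]
    push_cast
    field_simp

/-- Yu–Zhao: `-f_{l+1}/f_l` is nondecreasing in `σ = cosh ρ`, i.e. its
σ-derivative `(1/sinh ρ)·d/dρ` is nonnegative. -/
theorem neg_ratio_monotone (l : ℕ) (ρ : ℝ) (hρ : 0 < ρ) :
    0 ≤ (1 / Real.sinh ρ) * deriv (fun x => -(hf (l + 1) x / hf l x)) ρ := by
  have hs : 0 < Real.sinh ρ := Real.sinh_pos_iff.2 hρ
  have hF0 : 0 < FF l ρ := FF_pos l ρ
  have hF1 : 0 < FF (l+1) ρ := FF_pos (l+1) ρ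
  have hF2 : 0 < FF (l+2) ρ := FF_pos (l+2) ρ
  have hev : (fun x => -(hf (l + 1) x / hf l x))
      =ᶠ[𝓝 ρ] (fun x => -(((l:ℝ)+1) * (FF (l+1) x / FF l x))) := by
    filter_upwards [Ioi_mem_nhds hρ] with x hx
    rw [hf_eq (l+1) x hx, hf_eq l x hx, Nat.factorial_succ]
    have h0 : FF l x ≠ 0 := (FF_pos l x).ne'
    have h1 : (Nat.factorial l : ℝ) ≠ 0 := by
      exact_mod_cast Nat.factorial_ne_zero l
    push_cast
    field_simp
  have hG := (((FF_deriv (l+1) ρ).div (FF_deriv l ρ) hF0.ne').const_mul ((l:ℝ)+1)).neg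
  have target_eq : (1 / Real.sinh ρ) * deriv (fun x => -(hf (l + 1) x / hf l x)) ρ
      = ((l:ℝ)+1) * (((((l:ℝ)+2)*FF (l+2) ρ*FF l ρ - ((l:ℝ)+1)*(FF (l+1) ρ)^2)) / (FF l ρ)^2) := by
    rw [hev.deriv_eq, show deriv (fun x => -(((l:ℝ)+1) * (FF (l+1) x / FF l x))) ρ = _ from hG.deriv]
    push_cast
    field_simp
    ring
  rw [target_eq]
  have key := FF_cs l ρ
  apply mul_nonneg (by positivity)
  apply div_nonneg ?_ (by positivity)
  nlinarith [key, hF0, hF2]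
end

section
/- Let α_1 = 1 and α_{2m+1} = f_1·α_{2m−1} − 2t·∂α_{2m−1}/∂σ, where σ = cosh ρ, f_1 = ρ/sinh ρ, and f_{l+1} = −df_l/dσ. Then for every m ≥ 1, α_{2m+1}(t,ρ) = Σ_{i=0}^{m−1} t^i P_{m,i}(f_1,…,f_m) where each P_{m,i} is a polynomial with nonnegative coefficients; in particular α_{2m+1} > 0 for all t, ρ > 0. -/
/-- `alphaOdd m = α_{2m+1}`: the Davies–Mandouvalos recursion `α_1 = 1`,
`α_{2m+1} = f_1 α_{2m-1} - 2 t ∂α_{2m-1}/∂σ` where `∂/∂σ = (1/sinh ρ)·∂/∂ρ`. -/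
noncomputable def alphaOdd : ℕ → ℝ → ℝ → ℝ
  | 0 => fun _ _ => 1
  | (m + 1) => fun t ρ =>
      (ρ / Real.sinh ρ) * alphaOdd m t ρ -
        2 * t * ((1 / Real.sinh ρ) * deriv (alphaOdd m t) ρ)


open MvPolynomial

variable {m : ℕ}

/-- nonneg coefficients -/
def NN {σ : Type*} (p : MvPolynomial σ ℝ) : Prop := ∀ d, 0 ≤ MvPolynomial.coeff d p

lemma NN.add {σ : Type*} {p q : MvPolynomial σ ℝ} (hp : NN p) (hq : NN q) : NN (p + q) := by
  intro d; rw [coeff_add]; exact add_nonneg (hp d) (hq d)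

lemma NN.zero {σ : Type*} : NN (0 : MvPolynomial σ ℝ) := by intro d; simp

lemma NN.C_mul {σ : Type*} {c : ℝ} (hc : 0 ≤ c) {p : MvPolynomial σ ℝ} (hp : NN p) :
    NN (MvPolynomial.C c * p) := by
  intro d; rw [coeff_C_mul]; exact mul_nonneg hc (hp d)

lemma NN.X_mul {σ : Type*} [DecidableEq σ] {s : σ} {p : MvPolynomial σ ℝ} (hp : NN p) :
    NN (MvPolynomial.X s * p) := by
  intro d; rw [coeff_X_mul']; split
  · exact hp _
  · exact le_refl 0

lemma NN.X_pow {σ : Type*} [DecidableEq σ] {s : σ} {k : ℕ} :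
    NN ((MvPolynomial.X s : MvPolynomial σ ℝ) ^ k) := by
  intro d
  rw [X_pow_eq_monomial, coeff_monomial]
  split <;> norm_num

lemma NN.pderiv {σ : Type*} [DecidableEq σ] {s : σ} {p : MvPolynomial σ ℝ} (hp : NN p) :
    NN (MvPolynomial.pderiv s p) := by
  intro d
  rw [p.as_sum, map_sum, coeff_sum]
  refine Finset.sum_nonneg fun e _ => ?_
  rw [pderiv_monomial, coeff_monomial]
  split
  · exact mul_nonneg (hp e) (Nat.cast_nonneg _)
  · exact le_refl 0

lemma NN.sum {σ ι : Type*} {s : Finset ι} {f : ι → MvPolynomial σ ℝ}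
    (h : ∀ i ∈ s, NN (f i)) : NN (∑ i ∈ s, f i) := by
  intro d
  rw [coeff_sum]
  exact Finset.sum_nonneg fun i hi => h i hi d

lemma NN.eval_nonneg {σ : Type*} {p : MvPolynomial σ ℝ} (hp : NN p) {x : σ → ℝ}
    (hx : ∀ i, 0 ≤ x i) : 0 ≤ MvPolynomial.eval x p := by
  rw [eval_eq]
  exact Finset.sum_nonneg fun d _ =>
    mul_nonneg (hp d) (Finset.prod_nonneg fun i _ => pow_nonneg (hx i) _)

lemma pderiv_comm {σ : Type*} [DecidableEq σ] (i j : σ) (p : MvPolynomial σ ℝ) :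
    MvPolynomial.pderiv i (MvPolynomial.pderiv j p) =
      MvPolynomial.pderiv j (MvPolynomial.pderiv i p) := by
  induction p using MvPolynomial.induction_on' with
  | monomial d a =>
    simp only [pderiv_monomial]
    rw [tsub_right_comm]
    congr 1
    rcases eq_or_ne i j with rfl | hij
    · ring
    · rw [Finsupp.tsub_apply, Finsupp.tsub_apply, Finsupp.single_eq_of_ne' hij,
        Finsupp.single_eq_of_ne' (Ne.symm hij), Nat.sub_zero, Nat.sub_zero]
      ring
  | add p q hp hq => simp [map_add, hp, hq]

/-- chain rule for eval along a curve -/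
lemma hasDerivAt_eval {p : MvPolynomial (Fin m) ℝ} {g : Fin m → ℝ → ℝ} {g' : Fin m → ℝ} {x : ℝ}
    (hg : ∀ n, HasDerivAt (g n) (g' n) x) :
    HasDerivAt (fun y => MvPolynomial.eval (fun n => g n y) p)
      (∑ n, MvPolynomial.eval (fun n => g n x) (MvPolynomial.pderiv n p) * g' n) x := by
  induction p using MvPolynomial.induction_on with
  | C a =>
    simp only [eval_C, pderiv_C, map_zero, zero_mul, Finset.sum_const_zero]
    exact hasDerivAt_const x a
  | add p q hp hq =>
    simp only [eval_add, map_add]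
    refine (hp.add hq).congr_deriv ?_
    rw [← Finset.sum_add_distrib]
    congr 1; ext n; ring
  | mul_X p n hp =>
    simp only [eval_mul, eval_X]
    have key : ∀ j : Fin m, MvPolynomial.eval (fun n => g n x) (MvPolynomial.pderiv j (p * X n)) * g' j
        = MvPolynomial.eval (fun n => g n x) (MvPolynomial.pderiv j p) * g' j * g n x
          + (if j = n then MvPolynomial.eval (fun n => g n x) p * g' j else 0) := by
      intro j
      rw [pderiv_mul, map_add, eval_mul, eval_X, eval_mul]
      rcases eq_or_ne j n with rfl | hj
      · rw [pderiv_X_self, map_one, if_pos rfl]; ring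
      · rw [pderiv_X_of_ne hj.symm, map_zero, if_neg hj]; ring
    simp only [key]
    rw [Finset.sum_add_distrib, Finset.sum_ite_eq' Finset.univ n
      (fun j => MvPolynomial.eval (fun n => g n x) p * g' j), if_pos (Finset.mem_univ n)]
    refine (hp.mul (hg n)).congr_deriv ?_
    rw [Finset.sum_mul]

open Real intervalIntegral MeasureTheory

noncomputable def Gker (a b : ℝ) (k : ℕ) (ρ v : ℝ) : ℝ :=
  v ^ k * (Real.cosh ρ + 1) ^ (-a) * (2 + v ^ 2 * (Real.cosh ρ - 1)) ^ (-b)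

noncomputable def G (a b : ℝ) (k : ℕ) (ρ : ℝ) : ℝ := ∫ v in (0:ℝ)..1, Gker a b k ρ v

lemma base1_pos (ρ : ℝ) : 0 < Real.cosh ρ + 1 := by
  have := Real.one_le_cosh ρ; linarith

lemma base2_pos (ρ v : ℝ) : 0 < 2 + v ^ 2 * (Real.cosh ρ - 1) := by
  have h1 := Real.one_le_cosh ρ
  have h2 : 0 ≤ v ^ 2 := sq_nonneg v
  nlinarith

lemma Gker_pos {a b : ℝ} {k : ℕ} {ρ v : ℝ} (hv : 0 < v) : 0 < Gker a b k ρ v :=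
  mul_pos (mul_pos (pow_pos hv k) (Real.rpow_pos_of_pos (base1_pos ρ) _))
    (Real.rpow_pos_of_pos (base2_pos ρ v) _)

lemma Gker_cont (a b : ℝ) (k : ℕ) :
    Continuous (fun p : ℝ × ℝ => Gker a b k p.1 p.2) := by
  apply Continuous.mul
  · apply Continuous.mul
    · exact (continuous_pow k).comp continuous_snd
    · exact (Continuous.rpow_const ((Real.continuous_cosh.comp continuous_fst).add
        continuous_const) (fun p => Or.inl (base1_pos p.1).ne'))
  · exact Continuous.rpow_const
      (continuous_const.add (((continuous_pow 2).comp continuous_snd).mul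
        ((Real.continuous_cosh.comp continuous_fst).sub continuous_const)))
      (fun p => Or.inl (base2_pos p.1 p.2).ne')

lemma Gker_cont_v (a b : ℝ) (k : ℕ) (ρ : ℝ) : Continuous (fun v => Gker a b k ρ v) :=
  (Gker_cont a b k).comp (Continuous.prodMk_right ρ)

lemma Gker_intInt (a b : ℝ) (k : ℕ) (ρ : ℝ) :
    IntervalIntegrable (fun v => Gker a b k ρ v) MeasureTheory.volume 0 1 :=
  (Gker_cont_v a b k ρ).intervalIntegrable 0 1

lemma G_pos (a b : ℝ) (k : ℕ) (ρ : ℝ) : 0 < G a b k ρ :=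
  intervalIntegral_pos_of_pos_on (Gker_intInt a b k ρ)
    (fun v hv => Gker_pos hv.1) one_pos

/-- derivative of the kernel in `ρ` -/
lemma Gker_hasDerivAt (a b : ℝ) (k : ℕ) (v ρ : ℝ) :
    HasDerivAt (fun ρ => Gker a b k ρ v)
      (-Real.sinh ρ * (a * Gker (a+1) b k ρ v + b * Gker a (b+1) (k+2) ρ v)) ρ := by
  have hc : HasDerivAt (fun ρ => Real.cosh ρ + 1) (Real.sinh ρ) ρ :=
    (Real.hasDerivAt_cosh ρ).add_const 1
  have h1 : HasDerivAt (fun ρ => (Real.cosh ρ + 1) ^ (-a))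
      (Real.sinh ρ * (-a) * (Real.cosh ρ + 1) ^ (-a - 1)) ρ :=
    hc.rpow_const (Or.inl (base1_pos ρ).ne')
  have hc2 : HasDerivAt (fun ρ => 2 + v ^ 2 * (Real.cosh ρ - 1)) (v ^ 2 * Real.sinh ρ) ρ := by
    have : HasDerivAt (fun ρ => Real.cosh ρ - 1) (Real.sinh ρ) ρ :=
      (Real.hasDerivAt_cosh ρ).sub_const 1
    simpa using (this.const_mul (v ^ 2)).const_add 2
  have h2 : HasDerivAt (fun ρ => (2 + v ^ 2 * (Real.cosh ρ - 1)) ^ (-b))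
      (v ^ 2 * Real.sinh ρ * (-b) * (2 + v ^ 2 * (Real.cosh ρ - 1)) ^ (-b - 1)) ρ :=
    hc2.rpow_const (Or.inl (base2_pos ρ v).ne')
  have h3 := ((h1.const_mul (v ^ k)).mul h2)
  have hG : (fun ρ => Gker a b k ρ v) =
      fun ρ => (v ^ k * (Real.cosh ρ + 1) ^ (-a)) * (2 + v ^ 2 * (Real.cosh ρ - 1)) ^ (-b) := rfl
  rw [hG]
  refine h3.congr_deriv ?_
  unfold Gker
  rw [show (-(a+1) : ℝ) = -a - 1 by ring, show (-(b+1) : ℝ) = -b - 1 by ring]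
  rw [show v ^ (k+2) = v ^ k * v ^ 2 by ring]
  ring

lemma G_hasDerivAt (a b : ℝ) (k : ℕ) (ρ₀ : ℝ) :
    HasDerivAt (G a b k)
      (-Real.sinh ρ₀ * (a * G (a+1) b k ρ₀ + b * G a (b+1) (k+2) ρ₀)) ρ₀ := by
  set F' : ℝ → ℝ → ℝ := fun ρ v =>
    -Real.sinh ρ * (a * Gker (a+1) b k ρ v + b * Gker a (b+1) (k+2) ρ v) with hF'
  have contF' : Continuous (fun p : ℝ × ℝ => F' p.1 p.2) := by
    apply Continuous.mul
    · exact (Real.continuous_sinh.comp continuous_fst).neg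
    · exact (continuous_const.mul (Gker_cont (a+1) b k)).add
        (continuous_const.mul (Gker_cont a (b+1) (k+2)))
  obtain ⟨C, hC⟩ : ∃ C, ∀ p ∈ (Set.Icc (ρ₀ - 1) (ρ₀ + 1) ×ˢ Set.Icc (0:ℝ) 1),
      ‖F' p.1 p.2‖ ≤ C := by
    have hK : IsCompact (Set.Icc (ρ₀ - 1) (ρ₀ + 1) ×ˢ Set.Icc (0:ℝ) 1) :=
      (isCompact_Icc).prod isCompact_Icc
    obtain ⟨C, hC⟩ := hK.exists_bound_of_continuousOn (contF'.continuousOn)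
    exact ⟨C, fun p hp => hC p hp⟩
  have key := intervalIntegral.hasDerivAt_integral_of_dominated_loc_of_deriv_le
    (F := fun ρ v => Gker a b k ρ v) (F' := F') (x₀ := ρ₀) (a := (0:ℝ)) (b := (1:ℝ))
    (μ := MeasureTheory.volume) (bound := fun _ => C) (Metric.ball_mem_nhds ρ₀ one_pos)
    (Filter.Eventually.of_forall fun x =>
      ((Gker_cont_v a b k x).aestronglyMeasurable))
    (Gker_intInt a b k ρ₀)
    ((contF'.comp (Continuous.prodMk_right ρ₀)).aestronglyMeasurable)
    (Filter.Eventually.of_forall fun v hv x hx => by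
      apply hC (x, v)
      constructor
      · have : |x - ρ₀| < 1 := by simpa [Real.dist_eq] using hx
        constructor <;> [linarith [abs_lt.mp this |>.1]; linarith [abs_lt.mp this |>.2]]
      · rcases Set.mem_uIoc.mp hv with h | h
        · exact ⟨h.1.le, h.2⟩
        · exact absurd (h.1.trans_le h.2) (by norm_num)
      )
    (intervalIntegrable_const)
    (Filter.Eventually.of_forall fun v _ x _ => Gker_hasDerivAt a b k v x)
  have hint := key.2
  have : (∫ v in (0:ℝ)..1, F' ρ₀ v) =
      -Real.sinh ρ₀ * (a * G (a+1) b k ρ₀ + b * G a (b+1) (k+2) ρ₀) := by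
    rw [hF']
    simp only []
    rw [intervalIntegral.integral_const_mul]
    congr 1
    rw [intervalIntegral.integral_add (((Gker_intInt (a+1) b k ρ₀)).const_mul a)
      ((Gker_intInt a (b+1) (k+2) ρ₀).const_mul b),
      intervalIntegral.integral_const_mul, intervalIntegral.integral_const_mul]
    rfl
  rw [this] at hint
  exact hint

inductive Good : (ℝ → ℝ) → Prop
  | base (a b : ℝ) (k : ℕ) (ha : 0 < a) (hb : 0 < b) : Good (G a b k)
  | smul (c : ℝ) (hc : 0 ≤ c) {f : ℝ → ℝ} (hf : Good f) : Good (fun ρ => c * f ρ)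
  | add {f g : ℝ → ℝ} (hf : Good f) (hg : Good g) : Good (fun ρ => f ρ + g ρ)

lemma Good.nonneg {f : ℝ → ℝ} (h : Good f) (ρ : ℝ) : 0 ≤ f ρ := by
  induction h with
  | base a b k ha hb => exact (G_pos a b k ρ).le
  | smul c hc hf ih => exact mul_nonneg hc ih
  | add hf hg ihf ihg => exact add_nonneg ihf ihg

lemma Good.deriv {f : ℝ → ℝ} (h : Good f) :
    ∃ g : ℝ → ℝ, Good g ∧ ∀ ρ, HasDerivAt f (-Real.sinh ρ * g ρ) ρ := by
  induction h with
  | base a b k ha hb =>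
    refine ⟨fun ρ => a * G (a+1) b k ρ + b * G a (b+1) (k+2) ρ,
      Good.add (Good.smul a ha.le (Good.base _ _ _ (by linarith) hb))
        (Good.smul b hb.le (Good.base _ _ _ ha (by linarith))), fun ρ => ?_⟩
    exact G_hasDerivAt a b k ρ
  | smul c hc hfg ih =>
    obtain ⟨g, hg, hd⟩ := ih
    refine ⟨fun ρ => c * g ρ, Good.smul c hc hg, fun ρ => ?_⟩
    refine ((hd ρ).const_mul c).congr_deriv ?_; ring
  | add hf hg ihf ihg =>
    obtain ⟨g1, hg1, hd1⟩ := ihf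
    obtain ⟨g2, hg2, hd2⟩ := ihg
    refine ⟨fun ρ => g1 ρ + g2 ρ, Good.add hg1 hg2, fun ρ => ?_⟩
    refine ((hd1 ρ).add (hd2 ρ)).congr_deriv ?_; ring

lemma inner_integral {ρ : ℝ} (hρ : 0 < ρ) :
    (∫ v in (0:ℝ)..1, (2 + v ^ 2 * (Real.cosh ρ - 1)) ^ (-(1/2) : ℝ)) =
      (ρ / 2) / Real.sqrt (Real.cosh ρ - 1) := by
  set s : ℝ := Real.cosh ρ - 1 with hs
  have hρ2 : 0 < Real.sinh (ρ/2) := Real.sinh_pos_iff.mpr (by linarith)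
  have hsq : s = 2 * Real.sinh (ρ/2) ^ 2 := by
    have : Real.cosh ρ = Real.cosh (2 * (ρ/2)) := by congr 1; ring
    rw [hs, this, Real.cosh_two_mul, Real.cosh_sq']
    ring
  have hs_pos : 0 < s := by rw [hsq]; positivity
  set c : ℝ := Real.sqrt (s / 2) with hc
  have hc_pos : 0 < c := Real.sqrt_pos.mpr (by linarith)
  have hc_sq : c ^ 2 = s / 2 := Real.sq_sqrt (by linarith)
  have hc_eq : c = Real.sinh (ρ/2) := by
    rw [hc, hsq]
    rw [show (2 * Real.sinh (ρ/2) ^ 2) / 2 = Real.sinh (ρ/2) ^ 2 by ring]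
    exact Real.sqrt_sq hρ2.le
  have key : ∀ v : ℝ, HasDerivAt (fun v => (Real.sqrt 2 * c)⁻¹ * Real.arsinh (c * v))
      ((2 + v ^ 2 * s) ^ (-(1/2) : ℝ)) v := by
    intro v
    have hcv : HasDerivAt (fun v : ℝ => c * v) c v := by
      simpa using (hasDerivAt_id v).const_mul c
    have h := ((Real.hasDerivAt_arsinh (c * v)).comp v hcv).const_mul (Real.sqrt 2 * c)⁻¹
    refine h.congr_deriv ?_
    have hbase : (0:ℝ) < 2 + v ^ 2 * s := by nlinarith [sq_nonneg v]
    rw [Real.rpow_neg hbase.le, ← Real.sqrt_eq_rpow]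
    have h1 : Real.sqrt (1 + (c * v) ^ 2) = Real.sqrt ((2 + v ^ 2 * s)/2) := by
      congr 1
      rw [mul_pow, hc_sq]; ring
    have h2 : Real.sqrt (2 + v ^ 2 * s) = Real.sqrt 2 * Real.sqrt ((2 + v ^ 2 * s)/2) := by
      rw [← Real.sqrt_mul (by norm_num)]
      congr 1; ring
    rw [h1, h2]
    have hden : Real.sqrt ((2 + v ^ 2 * s)/2) ≠ 0 :=
      (Real.sqrt_pos.mpr (div_pos hbase two_pos)).ne'
    have h2pos : Real.sqrt 2 ≠ 0 := by positivity
    field_simp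
  have hcont : Continuous fun v : ℝ => (2 + v ^ 2 * s) ^ (-(1/2) : ℝ) := by
    apply Continuous.rpow_const
    · continuity
    · intro v; left
      nlinarith [sq_nonneg v, mul_nonneg (sq_nonneg v) hs_pos.le]
  rw [intervalIntegral.integral_eq_sub_of_hasDerivAt (fun v _ => key v)
    (hcont.intervalIntegrable 0 1)]
  rw [mul_one, mul_zero, Real.arsinh_zero, mul_zero, sub_zero, hc_eq, Real.arsinh_sinh]
  rw [← hc_eq, hc]
  rw [show Real.sqrt 2 * Real.sqrt (s/2) = Real.sqrt s by
    rw [← Real.sqrt_mul (by norm_num)]; congr 1; ring]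
  field_simp

lemma hf0_eq {ρ : ℝ} (hρ : 0 < ρ) : hf 0 ρ = 2 * G (1/2) (1/2) 0 ρ := by
  have hσ : 1 < Real.cosh ρ := Real.one_lt_cosh.mpr hρ.ne'
  have hsinh : 0 < Real.sinh ρ := Real.sinh_pos_iff.mpr hρ
  have : G (1/2) (1/2) 0 ρ =
      (Real.cosh ρ + 1) ^ (-(1/2) : ℝ) *
        ∫ v in (0:ℝ)..1, (2 + v ^ 2 * (Real.cosh ρ - 1)) ^ (-(1/2) : ℝ) := by
    rw [← intervalIntegral.integral_const_mul]
    unfold G Gker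
    congr 1
    ext v
    rw [pow_zero, one_mul]
  rw [this, inner_integral hρ]
  have h1 : (Real.cosh ρ + 1) ^ (-(1/2) : ℝ) = (Real.sqrt (Real.cosh ρ + 1))⁻¹ := by
    rw [Real.rpow_neg (by linarith), ← Real.sqrt_eq_rpow]
  have h2 : Real.sqrt (Real.cosh ρ + 1) * Real.sqrt (Real.cosh ρ - 1) = Real.sinh ρ := by
    rw [← Real.sqrt_mul (by linarith)]
    rw [show (Real.cosh ρ + 1) * (Real.cosh ρ - 1) = Real.cosh ρ ^ 2 - 1 by ring]
    rw [Real.cosh_sq']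
    rw [show (1 + Real.sinh ρ ^ 2 - 1 : ℝ) = Real.sinh ρ ^ 2 by ring]
    exact Real.sqrt_sq hsinh.le
  show ρ / Real.sinh ρ = _
  rw [h1, ← h2]
  have ha : Real.sqrt (Real.cosh ρ + 1) ≠ 0 := (Real.sqrt_pos.mpr (by linarith)).ne'
  have hb : Real.sqrt (Real.cosh ρ - 1) ≠ 0 := (Real.sqrt_pos.mpr (by linarith)).ne'
  field_simp

lemma good_hf (l : ℕ) : ∃ f : ℝ → ℝ, Good f ∧ ∀ ρ, 0 < ρ → hf l ρ = f ρ := by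
  induction l with
  | zero =>
    exact ⟨fun ρ => 2 * G (1/2) (1/2) 0 ρ,
      Good.smul 2 (by norm_num) (Good.base _ _ _ (by norm_num) (by norm_num)),
      fun ρ hρ => hf0_eq hρ⟩
  | succ l ih =>
    obtain ⟨f, hfg, heq⟩ := ih
    obtain ⟨g, hgg, hder⟩ := hfg.deriv
    refine ⟨g, hgg, fun ρ hρ => ?_⟩
    have hsinh : 0 < Real.sinh ρ := Real.sinh_pos_iff.mpr hρ
    have hev : hf l =ᶠ[nhds ρ] f :=
      Filter.eventuallyEq_of_mem (isOpen_Ioi.mem_nhds hρ) fun x hx => heq x hx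
    have hd : deriv (hf l) ρ = -Real.sinh ρ * g ρ := by
      rw [hev.deriv_eq]; exact (hder ρ).deriv
    show -(1 / Real.sinh ρ) * deriv (hf l) ρ = g ρ
    rw [hd]
    field_simp

lemma hf_nonneg (l : ℕ) {ρ : ℝ} (hρ : 0 < ρ) : 0 ≤ hf l ρ := by
  obtain ⟨f, hfg, heq⟩ := good_hf l
  rw [heq ρ hρ]; exact hfg.nonneg ρ

lemma hf_hasDerivAt (l : ℕ) {ρ : ℝ} (hρ : 0 < ρ) :
    HasDerivAt (hf l) (-Real.sinh ρ * hf (l + 1) ρ) ρ := by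
  obtain ⟨f, hfg, heq⟩ := good_hf l
  obtain ⟨g, hgg, hder⟩ := hfg.deriv
  have hev : hf l =ᶠ[nhds ρ] f :=
    Filter.eventuallyEq_of_mem (isOpen_Ioi.mem_nhds hρ) fun x hx => heq x hx
  have hsinh : 0 < Real.sinh ρ := Real.sinh_pos_iff.mpr hρ
  have h1 : HasDerivAt (hf l) (-Real.sinh ρ * g ρ) ρ :=
    (hder ρ).congr_of_eventuallyEq hev
  have h2 : hf (l + 1) ρ = g ρ := by
    show -(1 / Real.sinh ρ) * deriv (hf l) ρ = g ρ
    rw [h1.deriv]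
    field_simp
  rw [h2]
  exact h1

lemma hf_zero_pos {ρ : ℝ} (hρ : 0 < ρ) : 0 < hf 0 ρ := by
  have hsinh : 0 < Real.sinh ρ := Real.sinh_pos_iff.mpr hρ
  exact div_pos hρ hsinh

section Main

open MvPolynomial Finset

variable {m : ℕ}

noncomputable def DD (m : ℕ) (q : MvPolynomial (Fin m) ℝ) : MvPolynomial (Fin m) ℝ :=
  ∑ n : Fin m,
    (if h : (n : ℕ) + 1 < m then MvPolynomial.X (⟨(n : ℕ) + 1, h⟩ : Fin m) else 0) *
      MvPolynomial.pderiv n q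

lemma NN_DD {q : MvPolynomial (Fin m) ℝ} (h : NN q) : NN (DD m q) := by
  refine NN.sum fun n _ => ?_
  split
  · exact NN.X_mul h.pderiv
  · rw [zero_mul]; exact NN.zero

lemma DD_zero : DD m 0 = 0 := by
  unfold DD
  refine Finset.sum_eq_zero fun n _ => by rw [map_zero, mul_zero]

lemma pderiv_DD_eq_zero {k : ℕ} {q : MvPolynomial (Fin m) ℝ}
    (hq : ∀ j : Fin m, k ≤ (j : ℕ) → MvPolynomial.pderiv j q = 0)
    (j : Fin m) (hj : k + 1 ≤ (j : ℕ)) : MvPolynomial.pderiv j (DD m q) = 0 := by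
  unfold DD
  rw [map_sum]
  refine Finset.sum_eq_zero fun n _ => ?_
  rw [pderiv_mul]
  have h1 : MvPolynomial.pderiv j (MvPolynomial.pderiv n q) = 0 := by
    rw [pderiv_comm, hq j (le_trans (Nat.le_succ k) hj), map_zero]
  rw [h1, mul_zero, add_zero]
  split
  · rename_i h
    rcases eq_or_ne (⟨(n : ℕ) + 1, h⟩ : Fin m) j with he | hne
    · have hn : k ≤ (n : ℕ) := by
        have : (n : ℕ) + 1 = (j : ℕ) := by rw [← he]
        omega
      rw [hq n hn, mul_zero]
    · rw [pderiv_X_of_ne hne, zero_mul]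
  · rw [map_zero, zero_mul]

lemma eval_DD {k : ℕ} {q : MvPolynomial (Fin m) ℝ} {ρ : ℝ}
    (hq : ∀ j : Fin m, k ≤ (j : ℕ) → MvPolynomial.pderiv j q = 0)
    (hkm : k + 1 ≤ m) :
    MvPolynomial.eval (fun n : Fin m => hf n ρ) (DD m q) =
      ∑ n : Fin m, MvPolynomial.eval (fun n : Fin m => hf n ρ) (MvPolynomial.pderiv n q) *
        hf ((n : ℕ) + 1) ρ := by
  unfold DD
  rw [map_sum]
  refine Finset.sum_congr rfl fun n _ => ?_
  rw [eval_mul]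
  split
  · rw [eval_X]; ring
  · rename_i h
    have hn : k ≤ (n : ℕ) := by omega
    rw [hq n hn]
    simp

lemma aux_main (m k : ℕ) (hk1 : 1 ≤ k) (hkm : k ≤ m) :
    ∃ P : ℕ → MvPolynomial (Fin m) ℝ,
      (∀ i, NN (P i)) ∧ (∀ i, k ≤ i → P i = 0) ∧
      P 0 = MvPolynomial.X (⟨0, Nat.lt_of_lt_of_le Nat.zero_lt_one (hk1.trans hkm)⟩ : Fin m) ^ k ∧
      (∀ i (j : Fin m), k ≤ (j : ℕ) → MvPolynomial.pderiv j (P i) = 0) ∧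
      ∀ t ρ : ℝ, 0 < ρ →
        alphaOdd k t ρ = ∑ i ∈ Finset.range k,
          t ^ i * MvPolynomial.eval (fun n : Fin m => hf n ρ) (P i) := by
  have hm0 : 0 < m := Nat.lt_of_lt_of_le Nat.zero_lt_one (hk1.trans hkm)
  set z : Fin m := ⟨0, hm0⟩ with hz
  induction k, hk1 using Nat.le_induction with
  | base =>
    refine ⟨fun i => if i = 0 then MvPolynomial.X z ^ 1 else 0, fun i => ?_, fun i hi => ?_,
      by simp, fun i j hj => ?_, fun t ρ hρ => ?_⟩
    · show NN (if i = 0 then MvPolynomial.X z ^ 1 else 0)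
      split
      · exact NN.X_pow
      · exact NN.zero
    · have : i ≠ 0 := by omega
      simp [this]
    · show MvPolynomial.pderiv j (if i = 0 then MvPolynomial.X z ^ 1 else 0) = 0
      split
      · rw [pow_one]
        refine pderiv_X_of_ne fun he => ?_
        have : (z : ℕ) = (j : ℕ) := by rw [he]
        simp [hz] at this
        omega
      · exact map_zero _
    · have h0 : alphaOdd 0 t = fun _ => (1 : ℝ) := rfl
      have hd : deriv (alphaOdd 0 t) ρ = 0 := by rw [h0]; exact deriv_const _ _
      show (ρ / Real.sinh ρ) * alphaOdd 0 t ρ -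
          2 * t * ((1 / Real.sinh ρ) * deriv (alphaOdd 0 t) ρ) = _
      rw [hd, h0]
      simp [hz]
      rfl
  | succ k hk1' ih =>
    obtain ⟨P, hNN, hPzero, hP0, hPinv, hPeval⟩ := ih (by omega)
    set P' : ℕ → MvPolynomial (Fin m) ℝ := fun i =>
      MvPolynomial.X z * P i +
        MvPolynomial.C 2 * (Nat.casesOn i 0 fun j => DD m (P j)) with hP'
    have hrest_NN : ∀ i, NN ((Nat.casesOn i 0 fun j => DD m (P j) : MvPolynomial (Fin m) ℝ)) := by
      intro i
      cases i with
      | zero => exact NN.zero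
      | succ j => exact NN_DD (hNN j)
    refine ⟨P', fun i => ?_, fun i hi => ?_, ?_, fun i j hj => ?_, fun t ρ hρ => ?_⟩
    · exact NN.add (NN.X_mul (hNN i)) (NN.C_mul (by norm_num) (hrest_NN i))
    · show MvPolynomial.X z * P i +
        MvPolynomial.C 2 * (Nat.casesOn i 0 fun j => DD m (P j)) = 0
      have h1 : P i = 0 := hPzero i (by omega)
      have h2 : (Nat.casesOn i 0 fun j => DD m (P j) : MvPolynomial (Fin m) ℝ) = 0 := by
        cases i with
        | zero => rfl
        | succ j =>
          show DD m (P j) = 0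
          rw [hPzero j (by omega), DD_zero]
      rw [h1, h2, mul_zero, mul_zero, add_zero]
    · show MvPolynomial.X z * P 0 + _ = _
      rw [hP0]
      show MvPolynomial.X z * MvPolynomial.X z ^ k + MvPolynomial.C 2 * 0 = _
      ring
    · show MvPolynomial.pderiv j (MvPolynomial.X z * P i + _) = 0
      rw [map_add, pderiv_mul]
      have hzj : MvPolynomial.pderiv j (MvPolynomial.X z : MvPolynomial (Fin m) ℝ) = 0 := by
        refine pderiv_X_of_ne fun he => ?_
        have : (z : ℕ) = (j : ℕ) := by rw [he]
        simp [hz] at this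
        omega
      rw [hzj, zero_mul, hPinv i j (by omega), mul_zero, add_zero, zero_add, pderiv_C_mul]
      have : MvPolynomial.pderiv j (Nat.casesOn i 0 fun j => DD m (P j) : MvPolynomial (Fin m) ℝ)
          = 0 := by
        cases i with
        | zero => exact map_zero _
        | succ l => exact pderiv_DD_eq_zero (hPinv l) j hj
      rw [this, mul_zero]
    · -- the evaluation identity
      have hsinh : 0 < Real.sinh ρ := Real.sinh_pos_iff.mpr hρ
      set S : ℕ → ℝ := fun i => ∑ n : Fin m,
        MvPolynomial.eval (fun n : Fin m => hf n ρ) (MvPolynomial.pderiv n (P i)) *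
          hf ((n : ℕ) + 1) ρ with hS
      -- derivative of alphaOdd k t at ρ
      have hF : HasDerivAt (fun ρ' => ∑ i ∈ Finset.range k,
          t ^ i * MvPolynomial.eval (fun n : Fin m => hf n ρ') (P i))
          (∑ i ∈ Finset.range k, t ^ i * (∑ n : Fin m,
            MvPolynomial.eval (fun n : Fin m => hf n ρ) (MvPolynomial.pderiv n (P i)) * (-Real.sinh ρ * hf ((n : ℕ) + 1) ρ))) ρ := by
        refine HasDerivAt.fun_sum fun i _ => ?_
        exact (hasDerivAt_eval fun n => hf_hasDerivAt (n : ℕ) hρ).const_mul (t ^ i)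
      have heq : alphaOdd k t =ᶠ[nhds ρ] fun ρ' => ∑ i ∈ Finset.range k,
          t ^ i * MvPolynomial.eval (fun n : Fin m => hf n ρ') (P i) :=
        Filter.eventuallyEq_of_mem (isOpen_Ioi.mem_nhds hρ) fun x hx => hPeval t x hx
      have hda : deriv (alphaOdd k t) ρ = ∑ i ∈ Finset.range k, t ^ i * (∑ n : Fin m,
          MvPolynomial.eval (fun n : Fin m => hf n ρ) (MvPolynomial.pderiv n (P i)) * (-Real.sinh ρ * hf ((n : ℕ) + 1) ρ)) :=
        (hF.congr_of_eventuallyEq heq).deriv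
      have hinner : ∀ i, (∑ n : Fin m,
          MvPolynomial.eval (fun n : Fin m => hf n ρ) (MvPolynomial.pderiv n (P i)) * (-Real.sinh ρ * hf ((n : ℕ) + 1) ρ))
            = -Real.sinh ρ * S i := by
        intro i
        rw [hS, Finset.mul_sum]
        exact Finset.sum_congr rfl fun n _ => by ring
      -- LHS
      show (ρ / Real.sinh ρ) * alphaOdd k t ρ -
          2 * t * ((1 / Real.sinh ρ) * deriv (alphaOdd k t) ρ) = _
      rw [hda, hPeval t ρ hρ]
      have hsum : (∑ i ∈ Finset.range k, t ^ i * (∑ n : Fin m,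
          MvPolynomial.eval (fun n : Fin m => hf n ρ) (MvPolynomial.pderiv n (P i)) *
            (-Real.sinh ρ * hf ((n : ℕ) + 1) ρ)))
          = -Real.sinh ρ * ∑ i ∈ Finset.range k, t ^ i * S i := by
        rw [Finset.mul_sum]
        refine Finset.sum_congr rfl fun i _ => ?_
        rw [hinner i]; ring
      rw [hsum]
      have hRHS : ∀ i, MvPolynomial.eval (fun n : Fin m => hf n ρ) (P' i) =
          hf 0 ρ * MvPolynomial.eval (fun n : Fin m => hf n ρ) (P i) +
          2 * (Nat.casesOn i 0 fun j => S j) := by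
        intro i
        show MvPolynomial.eval (fun n : Fin m => hf n ρ)
          (MvPolynomial.X z * P i + MvPolynomial.C 2 * (Nat.casesOn i 0 fun j => DD m (P j))) = _
        simp only [map_add, eval_mul, eval_C, eval_X]
        have hXz : hf (z : ℕ) ρ = hf 0 ρ := rfl
        rw [hXz]
        congr 1
        congr 1
        cases i with
        | zero => simp
        | succ j =>
          show MvPolynomial.eval (fun n : Fin m => hf n ρ) (DD m (P j)) = S j
          rw [eval_DD (hPinv j) hkm, hS]
      have hgoalR : (∑ i ∈ Finset.range (k+1), t ^ i *
          MvPolynomial.eval (fun n : Fin m => hf n ρ) (P' i)) =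
          ∑ i ∈ Finset.range (k+1), t ^ i *
            (hf 0 ρ * MvPolynomial.eval (fun n : Fin m => hf n ρ) (P i) +
              2 * (Nat.casesOn i 0 fun j => S j)) :=
        Finset.sum_congr rfl fun i _ => by rw [hRHS i]
      rw [hgoalR]
      have split1 : ∑ i ∈ Finset.range (k+1), t ^ i *
          (hf 0 ρ * MvPolynomial.eval (fun n : Fin m => hf n ρ) (P i) +
            2 * (Nat.casesOn i 0 fun j => S j)) =
          (∑ i ∈ Finset.range (k+1), t ^ i *
            (hf 0 ρ * MvPolynomial.eval (fun n : Fin m => hf n ρ) (P i))) +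
          ∑ i ∈ Finset.range (k+1), t ^ i * (2 * (Nat.casesOn i 0 fun j => S j) : ℝ) := by
        rw [← Finset.sum_add_distrib]
        exact Finset.sum_congr rfl fun i _ => by ring
      rw [split1]
      have e1 : ∑ i ∈ Finset.range (k+1), t ^ i *
          (hf 0 ρ * MvPolynomial.eval (fun n : Fin m => hf n ρ) (P i)) =
          (ρ / Real.sinh ρ) * ∑ i ∈ Finset.range k, t ^ i *
            MvPolynomial.eval (fun n : Fin m => hf n ρ) (P i) := by
        rw [Finset.sum_range_succ, hPzero k le_rfl]
        have h0 : hf 0 ρ = ρ / Real.sinh ρ := rfl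
        rw [map_zero, Finset.mul_sum]
        simp only [mul_zero, add_zero]
        exact Finset.sum_congr rfl fun i _ => by rw [h0]; ring
      have e2 : ∑ i ∈ Finset.range (k+1), t ^ i * (2 * (Nat.casesOn i 0 fun j => S j) : ℝ) =
          2 * t * ∑ i ∈ Finset.range k, t ^ i * S i := by
        rw [Finset.sum_range_succ']
        simp only [pow_zero, one_mul]
        show (∑ i ∈ Finset.range k, t ^ (i+1) * (2 * S i)) + 2 * (0:ℝ) = _
        rw [mul_zero, add_zero, Finset.mul_sum]
        exact Finset.sum_congr rfl fun i _ => by ring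
      rw [e1, e2]
      field_simp
      ring
  
end Main

theorem alphaOdd_poly_rep (m : ℕ) (hm : 1 ≤ m) :
    ∃ P : ℕ → MvPolynomial (Fin m) ℝ,
      (∀ i d, 0 ≤ MvPolynomial.coeff d (P i)) ∧
      ∀ t ρ : ℝ, 0 < t → 0 < ρ →
        alphaOdd m t ρ =
          ∑ i ∈ Finset.range m,
            t ^ i * MvPolynomial.eval (fun s : Fin m => hf s ρ) (P i) ∧
        0 < alphaOdd m t ρ := by
  obtain ⟨P, hNN, hPzero, hP0, hPinv, hPeval⟩ := aux_main m m hm le_rfl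
  refine ⟨P, fun i d => hNN i d, fun t ρ ht hρ => ⟨hPeval t ρ hρ, ?_⟩⟩
  rw [hPeval t ρ hρ]
  obtain ⟨m', rfl⟩ : ∃ m', m = m' + 1 := ⟨m - 1, by omega⟩
  rw [Finset.sum_range_succ']
  refine add_pos_of_nonneg_of_pos ?_ ?_
  · refine Finset.sum_nonneg fun i _ => ?_
    exact mul_nonneg (pow_nonneg ht.le _)
      ((hNN _).eval_nonneg fun n => hf_nonneg _ hρ)
  · rw [pow_zero, one_mul, hP0, map_pow, MvPolynomial.eval_X]
    exact pow_pos (hf_zero_pos hρ) _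
end

section
/- For m = 1, the Davies–Mandouvalos recursion gives α_3 = f_1 = ρ/sinh(ρ), and log α_3 is convex in σ = cosh(ρ): (1/sinh ρ · d/dρ)² log(ρ/sinh ρ) ≥ 0 for all ρ > 0. -/
/-- Derivative with respect to `σ = cosh ρ`. -/
noncomputable def sigmaDeriv (g : ℝ → ℝ) (ρ : ℝ) : ℝ := (1 / Real.sinh ρ) * deriv g ρ

open Real

/-- Sign helper: if `f 0 = 0` and `f' ≥ 0` on `[0,∞)`, then `f ≥ 0` there. -/
lemma aux_nonneg {f f' : ℝ → ℝ} (hf : ∀ x, HasDerivAt f (f' x) x) (h0 : f 0 = 0)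
    (hf' : ∀ x, 0 ≤ x → 0 ≤ f' x) {x : ℝ} (hx : 0 ≤ x) : 0 ≤ f x := by
  have hdiff : Differentiable ℝ f := fun y => (hf y).differentiableAt
  have hmono : MonotoneOn f (Set.Ici (0 : ℝ)) := by
    apply monotoneOn_of_deriv_nonneg (convex_Ici 0)
      hdiff.continuous.continuousOn
      (fun y _ => (hdiff y).differentiableWithinAt)
    intro y hy
    rw [(hf y).deriv]
    exact hf' y (le_of_lt (by simpa using hy))
  calc (0:ℝ) = f 0 := h0.symm
    _ ≤ f x := hmono Set.self_mem_Ici hx hx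

lemma lem1 {x : ℝ} (hx : 0 ≤ x) : x ≤ Real.sinh x := Real.self_le_sinh_iff.2 hx

lemma lem2 {x : ℝ} (hx : 0 ≤ x) : Real.sinh x ≤ x * Real.cosh x := by
  have := aux_nonneg (f := fun x => x * Real.cosh x - Real.sinh x)
    (f' := fun x => x * Real.sinh x)
    (fun y => by
      have h := ((hasDerivAt_id y).mul (Real.hasDerivAt_cosh y)).sub (Real.hasDerivAt_sinh y)
      exact h.congr_deriv (by simp only [id_eq]; ring))
    (by simp) (fun y hy => mul_nonneg hy (Real.sinh_nonneg_iff.2 hy)) hx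
  have h2 : 0 ≤ x * Real.cosh x - Real.sinh x := this
  linarith

lemma lem3 {x : ℝ} (hx : 0 ≤ x) : 3 * Real.sinh x ≤ x * Real.cosh x + 2 * x := by
  have hg : ∀ y : ℝ, 0 ≤ y → 0 ≤ y * Real.sinh y + 2 - 2 * Real.cosh y := by
    intro y hy
    have := aux_nonneg (f := fun x => x * Real.sinh x + 2 - 2 * Real.cosh x)
      (f' := fun x => x * Real.cosh x - Real.sinh x)
      (fun z => by
        have h := (((hasDerivAt_id z).mul (Real.hasDerivAt_sinh z)).add_const 2).sub
          ((Real.hasDerivAt_cosh z).const_mul 2)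
        exact h.congr_deriv (by simp only [id_eq]; ring))
      (by simp) (fun z hz => show (0:ℝ) ≤ z * Real.cosh z - Real.sinh z by linarith [lem2 hz]) hy
    exact this
  have := aux_nonneg (f := fun x => x * Real.cosh x + 2 * x - 3 * Real.sinh x)
    (f' := fun x => x * Real.sinh x + 2 - 2 * Real.cosh x)
    (fun z => by
      have h := (((hasDerivAt_id z).mul (Real.hasDerivAt_cosh z)).add
        ((hasDerivAt_id z).const_mul 2)).sub ((Real.hasDerivAt_sinh z).const_mul 3)
      exact h.congr_deriv (by simp only [id_eq]; ring))
    (by simp) hg hx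
  have h2 : 0 ≤ x * Real.cosh x + 2 * x - 3 * Real.sinh x := this
  linarith

lemma hasDerivAt_g {x : ℝ} (hx : 0 < x) :
    HasDerivAt (fun x => Real.log (x / Real.sinh x))
      (1 / x - Real.cosh x / Real.sinh x) x := by
  have hs : 0 < Real.sinh x := Real.sinh_pos_iff.2 hx
  have h1 : HasDerivAt (fun x : ℝ => x / Real.sinh x)
      ((1 * Real.sinh x - x * Real.cosh x) / (Real.sinh x) ^ 2) x :=
    (hasDerivAt_id x).div (Real.hasDerivAt_sinh x) hs.ne'
  have hne : x / Real.sinh x ≠ 0 := (div_pos hx hs).ne'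
  have h2 := h1.log hne
  convert h2 using 1
  field_simp

/-- The key derivative of the inner σ-derivative written in closed form. -/
lemma hasDerivAt_F {x : ℝ} (hx : 0 < x) :
    HasDerivAt (fun y => (Real.sinh y - y * Real.cosh y) / (y * Real.sinh y ^ 2))
      ((x ^ 2 * (2 + Real.sinh x ^ 2) - x * Real.sinh x * Real.cosh x - Real.sinh x ^ 2)
        / (x ^ 2 * Real.sinh x ^ 3)) x := by
  have hs : 0 < Real.sinh x := Real.sinh_pos_iff.2 hx
  have hu : HasDerivAt (fun y => Real.sinh y - y * Real.cosh y)
      (Real.cosh x - (1 * Real.cosh x + x * Real.sinh x)) x :=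
    (Real.hasDerivAt_sinh x).sub ((hasDerivAt_id x).mul (Real.hasDerivAt_cosh x))
  have hv : HasDerivAt (fun y => y * Real.sinh y ^ 2)
      (1 * Real.sinh x ^ 2 + x * (2 * Real.sinh x ^ 1 * Real.cosh x)) x :=
    (hasDerivAt_id x).mul ((Real.hasDerivAt_sinh x).pow 2)
  have hvne : x * Real.sinh x ^ 2 ≠ 0 := by positivity
  have h := hu.div hv hvne
  refine h.congr_deriv ?_
  have hc : Real.cosh x ^ 2 = 1 + Real.sinh x ^ 2 := by
    have := Real.cosh_sq_sub_sinh_sq x; nlinarith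
  rw [div_eq_div_iff (pow_ne_zero 2 hvne) (by positivity)]
  linear_combination (2 * x ^ 4 * Real.sinh x ^ 4) * hc

/-- `α_3 = f_1 = ρ/sinh ρ`, and `log α_3` is convex in `σ = cosh ρ`. -/
theorem log_alpha3_convex (ρ : ℝ) (hρ : 0 < ρ) :
    0 ≤ sigmaDeriv (sigmaDeriv (fun x => Real.log (x / Real.sinh x))) ρ := by
  have hs : 0 < Real.sinh ρ := Real.sinh_pos_iff.2 hρ
  -- the inner sigmaDeriv agrees with F near ρ
  have hEq : sigmaDeriv (fun x => Real.log (x / Real.sinh x))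
      =ᶠ[nhds ρ] fun y => (Real.sinh y - y * Real.cosh y) / (y * Real.sinh y ^ 2) := by
    filter_upwards [Ioi_mem_nhds hρ] with y hy
    have hy' : (0:ℝ) < y := hy
    have hsy : 0 < Real.sinh y := Real.sinh_pos_iff.2 hy'
    rw [sigmaDeriv, (hasDerivAt_g hy').deriv, eq_div_iff (by positivity)]
    field_simp
  have hderiv : deriv (sigmaDeriv (fun x => Real.log (x / Real.sinh x))) ρ
      = (ρ ^ 2 * (2 + Real.sinh ρ ^ 2) - ρ * Real.sinh ρ * Real.cosh ρ - Real.sinh ρ ^ 2)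
        / (ρ ^ 2 * Real.sinh ρ ^ 3) := by
    rw [hEq.deriv_eq, (hasDerivAt_F hρ).deriv]
  rw [sigmaDeriv, hderiv]
  have hN : 0 ≤ ρ ^ 2 * (2 + Real.sinh ρ ^ 2) - ρ * Real.sinh ρ * Real.cosh ρ
      - Real.sinh ρ ^ 2 := by
    have h1 := lem1 hρ.le
    have h2 := lem2 hρ.le
    have h3 := lem3 hρ.le
    have hc1 : 1 ≤ Real.cosh ρ := Real.one_le_cosh ρ
    have hc : Real.cosh ρ ^ 2 = 1 + Real.sinh ρ ^ 2 := by
      have := Real.cosh_sq_sub_sinh_sq ρ; nlinarith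
    nlinarith [mul_nonneg (mul_nonneg hρ.le (Real.cosh_pos ρ).le)
        (by linarith : (0:ℝ) ≤ ρ * Real.cosh ρ + 2 * ρ - 3 * Real.sinh ρ),
      mul_nonneg (by linarith : (0:ℝ) ≤ Real.sinh ρ - ρ)
        (by nlinarith : (0:ℝ) ≤ 2 * (ρ * Real.cosh ρ) - Real.sinh ρ - ρ)]
  positivity
end

section
/- For all t, ρ > 0 and σ = cosh ρ, the function (t, σ) ↦ −ρ²/(4t) (with ρ = arccosh σ) satisfies ∂²/∂σ² (−ρ²/(4t)) = (ρ coth ρ − 1)/(2t sinh²ρ) > 0; i.e., the Gaussian exponent −ρ²/(4t) is strictly convex in σ. -/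
lemma sinh_lt_mul_cosh {x : ℝ} (hx : 0 < x) : Real.sinh x < x * Real.cosh x := by
  have h : StrictMonoOn (fun x => x * Real.cosh x - Real.sinh x) (Set.Ici (0:ℝ)) := by
    apply strictMonoOn_of_deriv_pos (convex_Ici 0)
    · fun_prop
    · intro y hy
      rw [interior_Ici] at hy
      have : deriv (fun x => x * Real.cosh x - Real.sinh x) y = y * Real.sinh y := by
        have h1 : HasDerivAt (fun x : ℝ => x * Real.cosh x - Real.sinh x)
            (1 * Real.cosh y + y * Real.sinh y - Real.cosh y) y :=
          ((hasDerivAt_id y).mul (Real.hasDerivAt_cosh y)).sub (Real.hasDerivAt_sinh y)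
        rw [h1.deriv]; ring
      rw [this]
      exact mul_pos hy (Real.sinh_pos_iff.mpr hy)
  have := h (Set.self_mem_Ici) (Set.mem_Ici.mpr hx.le) hx
  simpa using this

/-- The Gaussian exponent `-ρ²/(4t)` is strictly convex in `σ = cosh ρ`:
its second σ-derivative equals `(ρ coth ρ − 1)/(2 t sinh² ρ) > 0`. -/
theorem gaussian_exponent_convex (t ρ : ℝ) (ht : 0 < t) (hρ : 0 < ρ) :
    sigmaDeriv (sigmaDeriv (fun x => -x ^ 2 / (4 * t))) ρ =
      (ρ * (Real.cosh ρ / Real.sinh ρ) - 1) / (2 * t * Real.sinh ρ ^ 2) ∧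
    0 < (ρ * (Real.cosh ρ / Real.sinh ρ) - 1) / (2 * t * Real.sinh ρ ^ 2) := by
  have hs : Real.sinh ρ ≠ 0 := ne_of_gt (Real.sinh_pos_iff.mpr hρ)
  have ht4 : (4 * t) ≠ 0 := by positivity
  have hinner : sigmaDeriv (fun x => -x ^ 2 / (4 * t)) =
      fun x => (1 / Real.sinh x) * (-x / (2 * t)) := by
    funext x
    have h1 : HasDerivAt (fun x : ℝ => -x ^ 2 / (4 * t)) (-(2 * x) / (4 * t)) x := by
      have := ((hasDerivAt_pow 2 x).neg).div_const (4 * t)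
      simpa using this
    simp only [sigmaDeriv, h1.deriv]
    congr 1
    field_simp; ring
  constructor
  · rw [hinner, sigmaDeriv]
    have h2 : HasDerivAt (fun x => (1 / Real.sinh x) * (-x / (2 * t)))
        ((-(Real.cosh ρ) / Real.sinh ρ ^ 2) * (-ρ / (2 * t)) +
          (1 / Real.sinh ρ) * (-1 / (2 * t))) ρ := by
      have hc : HasDerivAt (fun x => 1 / Real.sinh x)
          (-(Real.cosh ρ) / Real.sinh ρ ^ 2) ρ := by
        have := (Real.hasDerivAt_sinh ρ).inv hs
        simpa [one_div, neg_div, Pi.inv_def] using this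
      have hl : HasDerivAt (fun x : ℝ => -x / (2 * t)) (-1 / (2 * t)) ρ := by
        have := ((hasDerivAt_id ρ).neg).div_const (2 * t)
        simpa using this
      exact hc.mul hl
    rw [h2.deriv]
    field_simp
    ring
  · apply div_pos
    · have := sinh_lt_mul_cosh hρ
      have hsp : 0 < Real.sinh ρ := Real.sinh_pos_iff.mpr hρ
      have h : 1 < ρ * (Real.cosh ρ / Real.sinh ρ) := by
        rw [mul_div_assoc' , lt_div_iff₀ hsp, one_mul]
        exact this
      linarith
    · positivity
end
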